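/- arXiv:1710.00979 — 5 statements merged into one kernel-verified Lean document; each statement's English description precedes it below -/
import Mathlib

section
/- Let M be a positive integer, p ∈ [0,1], and let S be a numerical semigroup all of whose minimal generators are at most M. Then Σ_{B ⊆ {1,…,M}, ⟨B⟩ = S} p^{|B|}(1−p)^{M−|B|} = p^{e(S)}·(1−p)^{g_M(S)}, where g_M(S) denotes the number of gaps of S that are at most M. If moreover S is cofinite, S ≠ ℕ, and F(S) ≤ M, then this probability equals p^{e(S)}·(1−p)^{g(S)}. -/
open Filter Topology
open scoped Classical BigOperators

/-- The set of gaps of a numerical semigroup `S ⊆ ℕ`. -/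
def gapSet (S : AddSubmonoid ℕ) : Set ℕ := {n : ℕ | n ∉ S}

/-- `S` is cofinite if its set of gaps is finite. -/
def IsCofinite (S : AddSubmonoid ℕ) : Prop := (gapSet S).Finite

/-- The minimal generators of `S`: nonzero elements of `S` that are not the
sum of two nonzero elements of `S`. -/
def minGens (S : AddSubmonoid ℕ) : Set ℕ :=
  {s : ℕ | s ∈ S ∧ s ≠ 0 ∧ ¬ ∃ a ∈ S, ∃ b ∈ S, a ≠ 0 ∧ b ≠ 0 ∧ s = a + b}

/-- The embedding dimension `e(S)`: the number of minimal generators of `S`. -/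
noncomputable def embDim (S : AddSubmonoid ℕ) : ℕ := (minGens S).ncard

/-- The genus `g(S)`: the number of gaps of `S` (junk value `0` if `S` is not cofinite). -/
noncomputable def genus (S : AddSubmonoid ℕ) : ℕ := (gapSet S).ncard

/-- The Frobenius number `F(S)`: the largest gap of `S`
(junk value `0` if `S` is not cofinite or `S = ℕ`). -/
noncomputable def frob (S : AddSubmonoid ℕ) : ℕ := sSup (gapSet S)

/-- A cofinite numerical semigroup `S ≠ ℕ` is irreducible if it is maximal with
respect to inclusion among numerical semigroups with Frobenius number `F(S)`. -/
def IsIrred (S : AddSubmonoid ℕ) : Prop :=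
  IsCofinite S ∧ S ≠ ⊤ ∧
    ∀ T : AddSubmonoid ℕ, S ≤ T → frob T = frob S → T = S

/-- The number of gaps of `S` that are at most `M`. -/
noncomputable def gapsUpTo (S : AddSubmonoid ℕ) (M : ℕ) : ℕ :=
  {x : ℕ | x ∉ S ∧ x ≤ M}.ncard

/-- The probability weight of a generating set `B ⊆ {1, …, M}` in the ER-type
model `S(M, p)`. -/
noncomputable def wt (p : ℝ) (M : ℕ) (B : Finset ℕ) : ℝ :=
  p ^ B.card * (1 - p) ^ (M - B.card)

/-- The probability in the ER-type model `S(M, p)` that the random numerical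
semigroup `𝒮 = ⟨𝒜⟩` lies in the event `E`. -/
noncomputable def probEvent (M : ℕ) (p : ℝ) (E : Set (AddSubmonoid ℕ)) : ℝ :=
  ∑ B ∈ (Finset.Icc 1 M).powerset,
    if AddSubmonoid.closure (B : Set ℕ) ∈ E then wt p M B else 0

/-- The expectation in the ER-type model `S(M, p)` of an invariant `X` of the
random numerical semigroup `𝒮 = ⟨𝒜⟩`. -/
noncomputable def expectVal (M : ℕ) (p : ℝ) (X : AddSubmonoid ℕ → ℕ) : ℝ :=
  ∑ B ∈ (Finset.Icc 1 M).powerset,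
    (X (AddSubmonoid.closure (B : Set ℕ)) : ℝ) * wt p M B

/-- `h_{n,i}`: the number of numerical semigroups `T` with `n ∉ T`, embedding
dimension `i`, and all minimal generators strictly less than `n/2`. -/
noncomputable def hvec (n i : ℕ) : ℕ :=
  {T : AddSubmonoid ℕ | n ∉ T ∧ embDim T = i ∧ ∀ a ∈ minGens T, 2 * a < n}.ncard

/-- `a_n(p)`: the probability that `n` is not in the semigroup generated by a
random subset of `{1, …, n-1}` chosen with inclusion probability `p`. -/
noncomputable def anp (n : ℕ) (p : ℝ) : ℝ :=
  ∑ A ∈ (Finset.Icc 1 (n - 1)).powerset,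
    if n ∉ AddSubmonoid.closure (A : Set ℕ) then
      p ^ A.card * (1 - p) ^ (n - 1 - A.card) else 0

lemma mem_closure_minGens (S : AddSubmonoid ℕ) : ∀ s ∈ S, s ∈ AddSubmonoid.closure (minGens S) := by
  intro s
  induction s using Nat.strong_induction_on with
  | _ s ih =>
    intro hs
    rcases eq_or_ne s 0 with rfl | hs0
    · exact zero_mem _
    by_cases hmin : s ∈ minGens S
    · exact AddSubmonoid.subset_closure hmin
    · have h : ∃ a ∈ S, ∃ b ∈ S, a ≠ 0 ∧ b ≠ 0 ∧ s = a + b := by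
        by_contra h
        exact hmin ⟨hs, hs0, h⟩
      obtain ⟨a, ha, b, hb, ha0, hb0, rfl⟩ := h
      exact add_mem (ih a (by omega) ha) (ih b (by omega) hb)

lemma minGen_mem_of_closure (S : AddSubmonoid ℕ) (B : Set ℕ) (h0 : (0:ℕ) ∉ B)
    (hcl : AddSubmonoid.closure B = S) {a : ℕ} (ha : a ∈ minGens S) : a ∈ B := by
  obtain ⟨haS, ha0, hmin⟩ := ha
  have hmem : a ∈ AddSubmonoid.closure B := hcl ▸ haS
  obtain ⟨l, hl, hsum⟩ := AddSubmonoid.exists_list_of_mem_closure hmem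
  have hBS : B ⊆ (S : Set ℕ) := by rw [← hcl]; exact AddSubmonoid.subset_closure
  match l, hl, hsum with
  | [], _, hsum => simp at hsum; omega
  | [x], hl, hsum =>
    simp at hsum; subst hsum; exact hl _ (by simp)
  | x :: y :: t, hl, hsum =>
    exfalso
    apply hmin
    refine ⟨x, hBS (hl x (by simp)), (y :: t).sum, ?_, ?_, ?_, by simp [← hsum]⟩
    · exact AddSubmonoid.list_sum_mem _ (fun z hz => hBS (hl z (by simp [hz])))
    · intro hx0; exact h0 (hx0 ▸ hl x (by simp))
    · have hy : y ∈ B := hl y (by simp)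
      have hy0 : y ≠ 0 := fun h => h0 (h ▸ hy)
      simp only [List.sum_cons]
      omega

theorem statement0 (M : ℕ) (hM : 1 ≤ M) (p : ℝ) (hp : p ∈ Set.Icc (0 : ℝ) 1)
    (S : AddSubmonoid ℕ) (hgen : ∀ a ∈ minGens S, a ≤ M) :
    (∑ B ∈ (Finset.Icc 1 M).powerset,
        if AddSubmonoid.closure (B : Set ℕ) = S then wt p M B else 0)
      = p ^ embDim S * (1 - p) ^ gapsUpTo S M
    ∧ (IsCofinite S → S ≠ ⊤ → frob S ≤ M →
        (∑ B ∈ (Finset.Icc 1 M).powerset,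
            if AddSubmonoid.closure (B : Set ℕ) = S then wt p M B else 0)
          = p ^ embDim S * (1 - p) ^ genus S) := by
  classical
  set G : Finset ℕ := (Finset.Icc 1 M).filter (· ∈ minGens S) with hGdef
  set T : Finset ℕ := (Finset.Icc 1 M).filter (· ∈ (S : Set ℕ)) with hTdef
  have hGset : minGens S = ↑G := by
    ext a
    simp only [hGdef, Finset.coe_filter, Finset.mem_Icc, Set.mem_setOf_eq]
    constructor
    · intro ha
      exact ⟨⟨Nat.one_le_iff_ne_zero.mpr ha.2.1, hgen a ha⟩, ha⟩
    · exact fun h => h.2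
  have he : embDim S = G.card := by
    rw [embDim, hGset, Set.ncard_coe_finset]
  have hGT : G ⊆ T := by
    intro a ha
    simp only [hGdef, hTdef, Finset.mem_filter] at *
    exact ⟨ha.1, ha.2.1⟩
  set K : Finset ℕ := T \ G with hKdef
  -- characterization of generating sets
  have key : ∀ B : Finset ℕ, B ⊆ Finset.Icc 1 M →
      (AddSubmonoid.closure (B : Set ℕ) = S ↔ G ⊆ B ∧ B ⊆ T) := by
    intro B hB
    have h0B : (0:ℕ) ∉ (B : Set ℕ) := by
      intro h
      have := hB h
      simp at this
    constructor
    · intro hcl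
      have hBS : (B : Set ℕ) ⊆ S := by rw [← hcl]; exact AddSubmonoid.subset_closure
      constructor
      · intro a ha
        have haG : a ∈ minGens S := by rw [hGset]; exact_mod_cast ha
        exact minGen_mem_of_closure S _ h0B hcl haG
      · intro a ha
        simp only [hTdef, Finset.mem_filter]
        exact ⟨hB ha, hBS ha⟩
    · rintro ⟨hGB, hBT⟩
      apply le_antisymm
      · rw [AddSubmonoid.closure_le]
        intro a ha
        have := hBT ha
        simp only [hTdef, Finset.mem_filter] at this
        exact this.2
      · intro s hs
        have h1 : s ∈ AddSubmonoid.closure (minGens S) := mem_closure_minGens S s hs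
        refine AddSubmonoid.closure_mono ?_ h1
        rw [hGset]
        exact_mod_cast hGB
  -- gap count
  have hgaps : gapsUpTo S M = M - T.card := by
    have hset : {x : ℕ | x ∉ S ∧ x ≤ M} = ↑((Finset.Icc 1 M).filter (· ∉ (S : Set ℕ))) := by
      ext x
      simp only [Set.mem_setOf_eq, Finset.coe_filter, Finset.mem_Icc]
      constructor
      · intro ⟨h1, h2⟩
        have : x ≠ 0 := fun h => h1 (h ▸ zero_mem S)
        exact ⟨⟨by omega, h2⟩, h1⟩
      · exact fun ⟨⟨_, h2⟩, h1⟩ => ⟨h1, h2⟩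
    rw [gapsUpTo, hset, Set.ncard_coe_finset]
    have := Finset.card_filter_add_card_filter_not
      (s := Finset.Icc 1 M) (p := (· ∈ (S : Set ℕ)))
    rw [Nat.card_Icc] at this
    simp only [hTdef]
    omega
  have hTM : T.card ≤ M := by
    have := Finset.card_le_card (Finset.filter_subset (· ∈ (S : Set ℕ)) (Finset.Icc 1 M))
    rwa [Nat.card_Icc, Nat.add_sub_cancel] at this
  have hKcard : K.card = T.card - G.card := Finset.card_sdiff_of_subset hGT
  have hGcard : G.card ≤ T.card := Finset.card_le_card hGT
  -- main computation
  have main : (∑ B ∈ (Finset.Icc 1 M).powerset,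
        if AddSubmonoid.closure (B : Set ℕ) = S then wt p M B else 0)
      = p ^ embDim S * (1 - p) ^ gapsUpTo S M := by
    rw [← Finset.sum_filter]
    have hre : ∑ B ∈ (Finset.Icc 1 M).powerset.filter
          (fun B : Finset ℕ => AddSubmonoid.closure (B : Set ℕ) = S), wt p M B
        = ∑ C ∈ K.powerset, wt p M (G ∪ C) := by
      refine Finset.sum_nbij' (fun B : Finset ℕ => B \ G) (fun C : Finset ℕ => G ∪ C) ?_ ?_ ?_ ?_ ?_
      · intro B hB
        simp only [Finset.mem_filter, Finset.mem_powerset] at hB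
        obtain ⟨hGB, hBT⟩ := (key B hB.1).mp hB.2
        rw [Finset.mem_powerset, hKdef]
        exact Finset.sdiff_subset_sdiff hBT (le_refl G)
      · intro C hC
        rw [Finset.mem_powerset] at hC
        have hCT : C ⊆ T := hC.trans (Finset.sdiff_subset)
        have hsub : G ∪ C ⊆ Finset.Icc 1 M := by
          apply Finset.union_subset
          · exact Finset.filter_subset _ _
          · exact hCT.trans (Finset.filter_subset _ _)
        simp only [Finset.mem_filter, Finset.mem_powerset]
        refine ⟨hsub, (key _ hsub).mpr ⟨Finset.subset_union_left, Finset.union_subset hGT hCT⟩⟩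
      · intro B hB
        simp only [Finset.mem_filter, Finset.mem_powerset] at hB
        obtain ⟨hGB, _⟩ := (key B hB.1).mp hB.2
        exact Finset.union_sdiff_of_subset hGB
      · intro C hC
        rw [Finset.mem_powerset] at hC
        have : Disjoint G C := by
          refine Finset.disjoint_left.mpr fun a haG haC => ?_
          have := hC haC
          rw [hKdef, Finset.mem_sdiff] at this
          exact this.2 haG
        exact Finset.union_sdiff_cancel_left this
      · intro B hB
        simp only [Finset.mem_filter, Finset.mem_powerset] at hB
        obtain ⟨hGB, _⟩ := (key B hB.1).mp hB.2
        rw [Finset.union_sdiff_of_subset hGB]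
    rw [hre]
    have hval : ∀ C ∈ K.powerset, wt p M (G ∪ C)
        = (p ^ embDim S * (1 - p) ^ gapsUpTo S M) * (p ^ C.card * (1 - p) ^ (K.card - C.card)) := by
      intro C hC
      rw [Finset.mem_powerset] at hC
      have hdisj : Disjoint G C := by
        refine Finset.disjoint_left.mpr fun a haG haC => ?_
        have := hC haC
        rw [hKdef, Finset.mem_sdiff] at this
        exact this.2 haG
      have hcard : (G ∪ C).card = G.card + C.card := Finset.card_union_of_disjoint hdisj
      have hCK : C.card ≤ K.card := Finset.card_le_card hC
      have harith : M - (G.card + C.card) = gapsUpTo S M + (K.card - C.card) := by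
        rw [hgaps, hKcard]; omega
      rw [wt, hcard, harith, he, pow_add, pow_add]
      ring
    rw [Finset.sum_congr rfl hval, ← Finset.mul_sum]
    have hbinom : ∑ C ∈ K.powerset, p ^ C.card * (1 - p) ^ (K.card - C.card) = 1 := by
      have hprod := Finset.prod_add (fun _ : ℕ => p) (fun _ : ℕ => 1 - p) K
      simp only [add_sub_cancel, Finset.prod_const, one_pow] at hprod
      refine Eq.trans ?_ hprod.symm
      apply Finset.sum_congr rfl
      intro C hC
      rw [Finset.mem_powerset] at hC
      rw [Finset.card_sdiff_of_subset hC]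
    rw [hbinom, mul_one]
  refine ⟨main, fun hcof hne hfrob => ?_⟩
  rw [main]
  congr 2
  rw [gapsUpTo, genus, gapSet]
  congr 1
  ext x
  simp only [Set.mem_setOf_eq, and_iff_left_iff_imp]
  intro hx
  have : x ≤ frob S := le_csSup (hcof.bddAbove) hx
  omega
end

section
/- The function t(M) = 1/M is a threshold function for cofiniteness in the ER-type model: if p : ℤ_{≥1} → [0,1] satisfies lim_{M→∞} M·p(M) = ∞, then lim_{M→∞} P(𝒮_M is cofinite) = 1; and if lim_{M→∞} M·p(M) = 0, then lim_{M→∞} P(𝒮_M is cofinite) = 0, where 𝒮_M ∼ S(M, p(M)). -/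
open Filter Topology
open scoped Classical BigOperators

namespace RNSAux

/-! ### Number theory: gcd one implies cofinite -/

lemma natBezout (a d : ℕ) (ha : 0 < a) : ∃ u v : ℕ, u * a = Nat.gcd a d + v * d := by
  rcases Nat.eq_zero_or_pos d with hd | hd
  · exact ⟨1, 0, by simp [hd]⟩
  by_cases hdvd : d ∣ a
  · refine ⟨1, a / d - 1, ?_⟩
    have h1 : Nat.gcd a d = d := Nat.gcd_eq_right hdvd
    have h2 : a / d * d = a := Nat.div_mul_cancel hdvd
    have h3 : 1 ≤ a / d := Nat.one_le_div_iff hd |>.2 (Nat.le_of_dvd ha hdvd)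
    have h4 : (a / d - 1) * d = a / d * d - 1 * d := Nat.sub_mul _ _ _
    have h5 : 1 * d ≤ a / d * d := Nat.mul_le_mul_right d h3
    omega
  · have hlt : Nat.gcd a d < d := by
      have hle : Nat.gcd a d ≤ d := Nat.le_of_dvd hd (Nat.gcd_dvd_right a d)
      rcases lt_or_eq_of_le hle with h | h
      · exact h
      · exact absurd (h ▸ Nat.gcd_dvd_left a d) hdvd
    obtain ⟨m, -, hm⟩ := Nat.exists_mul_mod_eq_gcd hlt
    refine ⟨m, a * m / d, ?_⟩
    have h1 := Nat.mod_add_div (a * m) d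
    rw [hm] at h1
    have h2 : m * a = a * m := mul_comm _ _
    have h3 : a * m / d * d = d * (a * m / d) := mul_comm _ _
    omega

lemma bez (B : Finset ℕ) : ∃ x ∈ AddSubmonoid.closure (B : Set ℕ),
    x + B.gcd id ∈ AddSubmonoid.closure (B : Set ℕ) := by
  classical
  induction B using Finset.induction_on with
  | empty => exact ⟨0, by simp, by simp⟩
  | @insert a s ha ih =>
    obtain ⟨x, hx, hxd⟩ := ih
    have hsub : AddSubmonoid.closure (s : Set ℕ) ≤
        AddSubmonoid.closure ((insert a s : Finset ℕ) : Set ℕ) := by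
      apply AddSubmonoid.closure_mono
      simp [Finset.coe_insert, Set.subset_insert]
    have hgcd : (insert a s).gcd id = Nat.gcd a (s.gcd id) := by
      rw [Finset.gcd_insert]; rfl
    set d := s.gcd id with hd
    rcases Nat.eq_zero_or_pos a with haz | hapos
    · subst haz
      refine ⟨x, hsub hx, ?_⟩
      rw [hgcd, Nat.gcd_zero_left]
      exact hsub hxd
    · obtain ⟨u, v, huv⟩ := natBezout a d hapos
      have hane : a ∈ AddSubmonoid.closure ((insert a s : Finset ℕ) : Set ℕ) :=
        AddSubmonoid.subset_closure (by simp)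
      refine ⟨v * (x + d), ?_, ?_⟩
      · simpa [nsmul_eq_mul] using AddSubmonoid.nsmul_mem _ (hsub hxd) v
      · have hexp : v * (x + d) = v * x + v * d := by ring
        have : v * (x + d) + (insert a s).gcd id = v * x + u * a := by
          rw [hgcd]; omega
        rw [this]
        exact AddSubmonoid.add_mem _
          (by simpa [nsmul_eq_mul] using AddSubmonoid.nsmul_mem _ (hsub hx) v)
          (by simpa [nsmul_eq_mul] using AddSubmonoid.nsmul_mem _ hane u)

lemma cofinite_of_consec (S : AddSubmonoid ℕ) (x : ℕ) (hx : x ∈ S) (hx1 : x + 1 ∈ S) :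
    IsCofinite S := by
  have key : ∀ n, x * x ≤ n → n ∈ S := by
    intro n hn
    rcases Nat.eq_zero_or_pos x with hxz | hxpos
    · subst hxz
      simpa using AddSubmonoid.nsmul_mem S hx1 n
    · set q := n / x with hq
      set r := n % x with hr
      have hdm : x * q + r = n := Nat.div_add_mod n x
      have hrx : r < x := Nat.mod_lt n hxpos
      have hqx : x ≤ q := by
        rw [hq, Nat.le_div_iff_mul_le hxpos]
        exact le_trans (le_of_eq (mul_comm x x)) hn
      have hmem : r * (x + 1) + (q - r) * x ∈ S :=
        AddSubmonoid.add_mem S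
          (by simpa [nsmul_eq_mul] using AddSubmonoid.nsmul_mem S hx1 r)
          (by simpa [nsmul_eq_mul] using AddSubmonoid.nsmul_mem S hx (q - r))
      have heq : r * (x + 1) + (q - r) * x = n := by
        have h1 : r * (x + 1) = r * x + r := by ring
        have h2 : (q - r) * x = q * x - r * x := Nat.sub_mul _ _ _
        have h3 : r * x ≤ q * x := Nat.mul_le_mul_right x (le_trans (le_of_lt hrx) hqx)
        have h4 : q * x = x * q := mul_comm _ _
        omega
      rwa [heq] at hmem
  have hsub : {n : ℕ | n ∉ S} ⊆ Set.Iio (x * x) := by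
    intro n hn
    by_contra h
    exact hn (key n (not_lt.mp h))
  exact Set.Finite.subset (Set.finite_Iio _) hsub

lemma cofinite_of_gcd_one (B : Finset ℕ) (hB : B.gcd id = 1) :
    IsCofinite (AddSubmonoid.closure (B : Set ℕ)) := by
  obtain ⟨x, hx, hxd⟩ := bez B
  rw [hB] at hxd
  exact cofinite_of_consec _ x hx hxd

lemma not_cof_bot : ¬ IsCofinite (⊥ : AddSubmonoid ℕ) := by
  intro h
  have hset : gapSet (⊥ : AddSubmonoid ℕ) = ({0} : Set ℕ)ᶜ := by
    ext n; simp [gapSet, AddSubmonoid.mem_bot]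
  rw [IsCofinite, hset] at h
  exact (Set.finite_singleton (0:ℕ)).infinite_compl h

lemma nonempty_of_cof (B : Finset ℕ)
    (h : IsCofinite (AddSubmonoid.closure (B : Set ℕ))) : B.Nonempty := by
  rcases B.eq_empty_or_nonempty with rfl | h'
  · exfalso
    rw [Finset.coe_empty, AddSubmonoid.closure_empty] at h
    exact not_cof_bot h
  · exact h'

/-! ### Binomial-type sums -/

lemma Zlem (p q : ℝ) (T : Finset ℕ) :
    ∑ B ∈ T.powerset, p ^ B.card * q ^ (T.card - B.card) = (p + q) ^ T.card := by
  classical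
  induction T using Finset.induction_on with
  | empty => simp
  | @insert a s ha ih =>
    rw [Finset.sum_powerset_insert ha]
    have hcard : (insert a s).card = s.card + 1 := Finset.card_insert_of_notMem ha
    have h1 : ∑ B ∈ s.powerset, p ^ B.card * q ^ ((insert a s).card - B.card)
        = q * ∑ B ∈ s.powerset, p ^ B.card * q ^ (s.card - B.card) := by
      rw [Finset.mul_sum]
      apply Finset.sum_congr rfl
      intro B hB
      have hle : B.card ≤ s.card := Finset.card_le_card (Finset.mem_powerset.mp hB)
      have h : (insert a s).card - B.card = (s.card - B.card) + 1 := by omega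
      rw [h, pow_succ]; ring
    have h2 : ∑ B ∈ s.powerset, p ^ (insert a B).card * q ^ ((insert a s).card - (insert a B).card)
        = p * ∑ B ∈ s.powerset, p ^ B.card * q ^ (s.card - B.card) := by
      rw [Finset.mul_sum]
      apply Finset.sum_congr rfl
      intro B hB
      have hBs : B ⊆ s := Finset.mem_powerset.mp hB
      have haB : a ∉ B := fun h => ha (hBs h)
      have hci : (insert a B).card = B.card + 1 := Finset.card_insert_of_notMem haB
      have hle : B.card ≤ s.card := Finset.card_le_card hBs
      rw [hci, show (insert a s).card - (B.card + 1) = s.card - B.card by omega, pow_succ]; ring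
    rw [h1, h2, ih, hcard, pow_succ]; ring

lemma Glem (p q : ℝ) (hp : 0 ≤ p) (hq0 : 0 ≤ q) (hpq : p + q = 1) (T : Finset ℕ) :
    ∑ B ∈ T.powerset, (if 1 ≤ B.card then p ^ B.card * q ^ (T.card - B.card) else 0)
      ≤ (T.card : ℝ) * p := by
  classical
  induction T using Finset.induction_on with
  | empty => simp
  | @insert a s ha ih =>
    rw [Finset.sum_powerset_insert ha]
    have hcard : (insert a s).card = s.card + 1 := Finset.card_insert_of_notMem ha
    have hq1 : q ≤ 1 := by linarith
    have h1 : ∑ B ∈ s.powerset,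
        (if 1 ≤ B.card then p ^ B.card * q ^ ((insert a s).card - B.card) else 0)
        = q * ∑ B ∈ s.powerset, (if 1 ≤ B.card then p ^ B.card * q ^ (s.card - B.card) else 0) := by
      rw [Finset.mul_sum]
      apply Finset.sum_congr rfl
      intro B hB
      have hle : B.card ≤ s.card := Finset.card_le_card (Finset.mem_powerset.mp hB)
      have he : (insert a s).card - B.card = (s.card - B.card) + 1 := by omega
      by_cases h : 1 ≤ B.card
      · simp only [h, if_true, he, pow_succ]; ring
      · simp [h]
    have h2 : ∑ B ∈ s.powerset,
        (if 1 ≤ (insert a B).card then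
          p ^ (insert a B).card * q ^ ((insert a s).card - (insert a B).card) else 0)
        = p * ∑ B ∈ s.powerset, p ^ B.card * q ^ (s.card - B.card) := by
      rw [Finset.mul_sum]
      apply Finset.sum_congr rfl
      intro B hB
      have hBs : B ⊆ s := Finset.mem_powerset.mp hB
      have haB : a ∉ B := fun h => ha (hBs h)
      have hci : (insert a B).card = B.card + 1 := Finset.card_insert_of_notMem haB
      have hle : B.card ≤ s.card := Finset.card_le_card hBs
      rw [hci, show (insert a s).card - (B.card + 1) = s.card - B.card by omega,
        if_pos (Nat.le_add_left 1 B.card), pow_succ]; ring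
    rw [h1, h2, Zlem, hpq, one_pow, mul_one, hcard]
    have hsum_nonneg : (0:ℝ) ≤ ∑ B ∈ s.powerset,
        (if 1 ≤ B.card then p ^ B.card * q ^ (s.card - B.card) else 0) := by
      apply Finset.sum_nonneg
      intro B _
      split
      · positivity
      · exact le_refl 0
    calc q * (∑ B ∈ s.powerset, (if 1 ≤ B.card then p ^ B.card * q ^ (s.card - B.card) else 0)) + p
        ≤ 1 * ((s.card : ℝ) * p) + p := by
          apply add_le_add_left
          apply mul_le_mul hq1 ih hsum_nonneg zero_le_one
      _ = ((s.card : ℝ) + 1) * p := by ring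
      _ = (((s.card + 1 : ℕ)) : ℝ) * p := by push_cast; ring

lemma Flem (p q : ℝ) (hp : 0 ≤ p) (hq0 : 0 ≤ q) (hpq : p + q = 1) (T : Finset ℕ) :
    ∑ B ∈ T.powerset, (if 2 ≤ B.card then p ^ B.card * q ^ (T.card - B.card) else 0)
      ≤ (T.card : ℝ) ^ 2 * p ^ 2 := by
  classical
  induction T using Finset.induction_on with
  | empty => simp
  | @insert a s ha ih =>
    rw [Finset.sum_powerset_insert ha]
    have hcard : (insert a s).card = s.card + 1 := Finset.card_insert_of_notMem ha
    have hq1 : q ≤ 1 := by linarith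
    have h1 : ∑ B ∈ s.powerset,
        (if 2 ≤ B.card then p ^ B.card * q ^ ((insert a s).card - B.card) else 0)
        = q * ∑ B ∈ s.powerset, (if 2 ≤ B.card then p ^ B.card * q ^ (s.card - B.card) else 0) := by
      rw [Finset.mul_sum]
      apply Finset.sum_congr rfl
      intro B hB
      have hle : B.card ≤ s.card := Finset.card_le_card (Finset.mem_powerset.mp hB)
      have he : (insert a s).card - B.card = (s.card - B.card) + 1 := by omega
      by_cases h : 2 ≤ B.card
      · simp only [h, if_true, he, pow_succ]; ring
      · simp [h]
    have h2 : ∑ B ∈ s.powerset,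
        (if 2 ≤ (insert a B).card then
          p ^ (insert a B).card * q ^ ((insert a s).card - (insert a B).card) else 0)
        = p * ∑ B ∈ s.powerset, (if 1 ≤ B.card then p ^ B.card * q ^ (s.card - B.card) else 0) := by
      rw [Finset.mul_sum]
      apply Finset.sum_congr rfl
      intro B hB
      have hBs : B ⊆ s := Finset.mem_powerset.mp hB
      have haB : a ∉ B := fun h => ha (hBs h)
      have hci : (insert a B).card = B.card + 1 := Finset.card_insert_of_notMem haB
      have hle : B.card ≤ s.card := Finset.card_le_card hBs
      rw [hci, show (insert a s).card - (B.card + 1) = s.card - B.card by omega]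
      by_cases h : 1 ≤ B.card
      · rw [if_pos (by omega), if_pos h, pow_succ]; ring
      · rw [if_neg (by omega), if_neg h, mul_zero]
    rw [h1, h2, hcard]
    have hF : (0:ℝ) ≤ ∑ B ∈ s.powerset,
        (if 2 ≤ B.card then p ^ B.card * q ^ (s.card - B.card) else 0) := by
      apply Finset.sum_nonneg
      intro B _
      split
      · positivity
      · exact le_refl 0
    have hGle := Glem p q hp hq0 hpq s
    calc (q * ∑ B ∈ s.powerset, (if 2 ≤ B.card then p ^ B.card * q ^ (s.card - B.card) else 0))
          + p * ∑ B ∈ s.powerset, (if 1 ≤ B.card then p ^ B.card * q ^ (s.card - B.card) else 0)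
        ≤ 1 * ((s.card : ℝ)^2 * p^2) + p * ((s.card : ℝ) * p) := by
          apply add_le_add
          · exact mul_le_mul hq1 ih hF zero_le_one
          · exact mul_le_mul_of_nonneg_left hGle hp
      _ ≤ (((s.card + 1 : ℕ)) : ℝ)^2 * p^2 := by
          push_cast
          nlinarith [Nat.cast_nonneg (α := ℝ) s.card]


/-! ### Probability estimates -/

lemma wt_nonneg (p : ℝ) (hp0 : 0 ≤ p) (hp1 : p ≤ 1) (M : ℕ) (B : Finset ℕ) :
    0 ≤ wt p M B := by
  have h : (0:ℝ) ≤ 1 - p := by linarith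
  unfold wt
  positivity

lemma cardIcc (M : ℕ) : (Finset.Icc 1 M).card = M := by
  rw [Nat.card_Icc]; omega

lemma total_one (p : ℝ) (M : ℕ) :
    ∑ B ∈ (Finset.Icc 1 M).powerset, wt p M B = 1 := by
  have h := Zlem p (1-p) (Finset.Icc 1 M)
  rw [cardIcc, show p + (1-p) = 1 by ring, one_pow] at h
  simpa [wt] using h

lemma prob_nonneg (p : ℝ) (hp0 : 0 ≤ p) (hp1 : p ≤ 1) (M : ℕ) (E : Set (AddSubmonoid ℕ)) :
    0 ≤ probEvent M p E := by
  apply Finset.sum_nonneg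
  intro B _
  split
  · exact wt_nonneg p hp0 hp1 M B
  · exact le_refl 0

lemma part2_bound (p : ℝ) (hp0 : 0 ≤ p) (hp1 : p ≤ 1) (M : ℕ) :
    probEvent M p {S | IsCofinite S} ≤ (M:ℝ) * p := by
  have hG := Glem p (1-p) hp0 (by linarith) (by ring) (Finset.Icc 1 M)
  rw [cardIcc] at hG
  refine le_trans (Finset.sum_le_sum ?_) hG
  intro B _
  by_cases hc : AddSubmonoid.closure (B : Set ℕ) ∈ {S | IsCofinite S}
  · have h1 : 1 ≤ B.card := Finset.card_pos.mpr (nonempty_of_cof B hc)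
    rw [if_pos hc, if_pos h1]
    exact le_of_eq rfl
  · rw [if_neg hc]
    split
    · have h : (0:ℝ) ≤ 1 - p := by linarith
      positivity
    · exact le_refl 0

lemma split_one (p : ℝ) (M : ℕ) :
    probEvent M p {S | IsCofinite S}
      = 1 - ∑ B ∈ (Finset.Icc 1 M).powerset,
          (if IsCofinite (AddSubmonoid.closure (B : Set ℕ)) then 0 else wt p M B) := by
  rw [← total_one p M, probEvent, ← Finset.sum_sub_distrib]
  apply Finset.sum_congr rfl
  intro B _
  by_cases h : IsCofinite (AddSubmonoid.closure (B : Set ℕ))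
  · simp [Set.mem_setOf_eq, h]
  · simp [Set.mem_setOf_eq, h]

lemma inner_d (p : ℝ) (hp0 : 0 ≤ p) (hp1 : p ≤ 1) (M d : ℕ) (hd : 2 ≤ d) :
    ∑ B ∈ (Finset.Icc 1 M).powerset,
      (if (B ⊆ Finset.filter (fun k => d ∣ k) (Finset.Icc 1 M) ∧ 2 ≤ B.card)
        then wt p M B else 0)
      ≤ ((M / d : ℕ) : ℝ)^2 * p^2 * (1 - p)^(M - M / d) := by
  classical
  have hq0 : (0:ℝ) ≤ 1 - p := by linarith
  set D := Finset.filter (fun k => d ∣ k) (Finset.Icc 1 M) with hD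
  have hDsub : D ⊆ Finset.Icc 1 M := Finset.filter_subset _ _
  have hcardD : D.card = M / d := by
    rw [hD, show Finset.Icc 1 M = Finset.Ioc 0 M from (Finset.Icc_add_one_left_eq_Ioc 0 M)]
    exact Nat.Ioc_filter_dvd_card_eq_div M d
  have hDM : D.card ≤ M := by
    have := Finset.card_le_card hDsub
    rwa [cardIcc] at this
  have hps : D.powerset ⊆ (Finset.Icc 1 M).powerset := Finset.powerset_mono.mpr hDsub
  have hstep : ∑ B ∈ (Finset.Icc 1 M).powerset,
      (if (B ⊆ D ∧ 2 ≤ B.card) then wt p M B else 0)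
      = ∑ B ∈ D.powerset, (if 2 ≤ B.card then wt p M B else 0) := by
    rw [← Finset.sum_subset hps ?_]
    · apply Finset.sum_congr rfl
      intro B hB
      have hBD : B ⊆ D := Finset.mem_powerset.mp hB
      simp only [hBD, true_and]
    · intro B _ hnB
      have hBD : ¬ B ⊆ D := fun hs => hnB (Finset.mem_powerset.mpr hs)
      rw [if_neg (by tauto)]
  rw [hstep]
  have hwt : ∀ B ∈ D.powerset,
      (if 2 ≤ B.card then wt p M B else 0)
      = (1 - p)^(M - D.card) * (if 2 ≤ B.card then p^B.card * (1-p)^(D.card - B.card) else 0) := by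
    intro B hB
    have hle : B.card ≤ D.card := Finset.card_le_card (Finset.mem_powerset.mp hB)
    have hexp : M - B.card = (M - D.card) + (D.card - B.card) := by omega
    by_cases h : 2 ≤ B.card
    · rw [if_pos h, if_pos h]
      unfold wt
      rw [hexp, pow_add]
      ring
    · rw [if_neg h, if_neg h, mul_zero]
  rw [Finset.sum_congr rfl hwt, ← Finset.mul_sum]
  have hFle := Flem p (1-p) hp0 hq0 (by ring) D
  calc (1 - p)^(M - D.card) *
        ∑ B ∈ D.powerset, (if 2 ≤ B.card then p^B.card * (1-p)^(D.card - B.card) else 0)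
      ≤ (1 - p)^(M - D.card) * ((D.card : ℝ)^2 * p^2) := by
        apply mul_le_mul_of_nonneg_left hFle (by positivity)
    _ = ((M / d : ℕ) : ℝ)^2 * p^2 * (1 - p)^(M - M / d) := by
        rw [hcardD]; ring

lemma invsq_aux (N : ℕ) :
    ∑ d ∈ Finset.Icc 2 (N+1), (1:ℝ)/(d:ℝ)^2 ≤ 1 - 1/((N:ℝ)+1) := by
  induction N with
  | zero =>
    rw [show Finset.Icc 2 1 = (∅ : Finset ℕ) from Finset.Icc_eq_empty (by omega)]
    norm_num
  | succ n ih =>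
    rw [← Finset.insert_Icc_right_eq_Icc_add_one (by omega : 2 ≤ n + 1 + 1),
      Finset.sum_insert (by simp)]
    have hx : (0:ℝ) ≤ (n:ℝ) := Nat.cast_nonneg n
    have key : (1:ℝ)/((n:ℝ)+1+1)^2 + 1/((n:ℝ)+1+1) ≤ 1/((n:ℝ)+1) := by
      rw [div_add_div _ _ (by positivity) (by positivity),
        div_le_div_iff₀ (by positivity) (by positivity)]
      ring_nf
      nlinarith [hx]
    push_cast
    push_cast at ih
    linarith [ih, key]

lemma invsq (M : ℕ) : ∑ d ∈ Finset.Icc 2 M, (1:ℝ)/(d:ℝ)^2 ≤ 1 := by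
  cases M with
  | zero => simp
  | succ n =>
    refine le_trans (invsq_aux n) ?_
    have : (0:ℝ) < (n:ℝ) + 1 := by positivity
    have h1 : (0:ℝ) ≤ 1/((n:ℝ)+1) := by positivity
    linarith

lemma pow_one_sub_le_exp (p : ℝ) (hp1 : p ≤ 1) (k : ℕ) :
    (1-p)^k ≤ Real.exp (-(p * k)) := by
  have h1 : 1 - p ≤ Real.exp (-p) := by
    have := Real.add_one_le_exp (-p); linarith
  calc (1-p)^k ≤ (Real.exp (-p))^k := pow_le_pow_left₀ (by linarith) h1 k
    _ = Real.exp (-(p * (k:ℝ))) := by rw [← Real.exp_nat_mul]; congr 1; ring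

lemma NC_bound (p : ℝ) (hp0 : 0 ≤ p) (hp1 : p ≤ 1) (M : ℕ) :
    ∑ B ∈ (Finset.Icc 1 M).powerset,
      (if IsCofinite (AddSubmonoid.closure (B : Set ℕ)) then 0 else wt p M B)
    ≤ (1-p)^M + (M:ℝ)*p*(1-p)^(M-1) + ((M:ℝ)*p)^2 * (1-p)^(M - M/2) := by
  classical
  have hq0 : (0:ℝ) ≤ 1 - p := by linarith
  have hwt := wt_nonneg p hp0 hp1 M
  have hpt : ∀ B ∈ (Finset.Icc 1 M).powerset,
      (if IsCofinite (AddSubmonoid.closure (B : Set ℕ)) then 0 else wt p M B)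
      ≤ (if B = ∅ then wt p M B else 0)
        + (∑ b ∈ Finset.Icc 1 M, if B = {b} then wt p M B else 0)
        + (∑ d ∈ Finset.Icc 2 M,
            if (B ⊆ Finset.filter (fun k => d ∣ k) (Finset.Icc 1 M) ∧ 2 ≤ B.card)
            then wt p M B else 0) := by
    intro B hB
    have hT1 : (0:ℝ) ≤ if B = ∅ then wt p M B else 0 := by
      split
      · exact hwt B
      · exact le_refl 0
    have hT2 : (0:ℝ) ≤ ∑ b ∈ Finset.Icc 1 M, (if B = {b} then wt p M B else 0) := by
      apply Finset.sum_nonneg; intro b _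
      split
      · exact hwt B
      · exact le_refl 0
    have hT3 : (0:ℝ) ≤ ∑ d ∈ Finset.Icc 2 M,
        (if (B ⊆ Finset.filter (fun k => d ∣ k) (Finset.Icc 1 M) ∧ 2 ≤ B.card)
          then wt p M B else 0) := by
      apply Finset.sum_nonneg; intro d _
      split
      · exact hwt B
      · exact le_refl 0
    by_cases hc : IsCofinite (AddSubmonoid.closure (B : Set ℕ))
    · rw [if_pos hc]
      exact add_nonneg (add_nonneg hT1 hT2) hT3
    · rw [if_neg hc]
      rcases Nat.lt_or_ge B.card 2 with hcard | hcard
      · rcases Nat.le_one_iff_eq_zero_or_eq_one.mp (by omega : B.card ≤ 1) with h0 | h1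
        · have hBe : B = ∅ := Finset.card_eq_zero.mp h0
          rw [if_pos hBe]
          linarith
        · obtain ⟨b, hb⟩ := Finset.card_eq_one.mp h1
          have hbmem : b ∈ Finset.Icc 1 M := by
            have hsubI : B ⊆ Finset.Icc 1 M := Finset.mem_powerset.mp hB
            apply hsubI
            rw [hb]; exact Finset.mem_singleton_self b
          have hterm : wt p M B ≤ ∑ b' ∈ Finset.Icc 1 M, (if B = {b'} then wt p M B else 0) := by
            have hs := Finset.single_le_sum
              (f := fun b' => if B = {b'} then wt p M B else 0)
              (fun i _ => by
                split
                · exact hwt B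
                · exact le_refl 0) hbmem
            rwa [if_pos hb] at hs
          linarith
      · set dd := B.gcd id with hdd
        have hsubI : B ⊆ Finset.Icc 1 M := Finset.mem_powerset.mp hB
        obtain ⟨b, hbB⟩ : B.Nonempty := Finset.card_pos.mp (by omega)
        have hb1 : 1 ≤ b ∧ b ≤ M := by
          have := hsubI hbB
          simpa [Finset.mem_Icc] using this
        have hdvd : ∀ c ∈ B, dd ∣ c := fun c hc' => Finset.gcd_dvd hc'
        have hddpos : 0 < dd := by
          rcases Nat.eq_zero_or_pos dd with h | h
          · exfalso
            have hd0 := hdvd b hbB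
            rw [h] at hd0
            have := Nat.eq_zero_of_zero_dvd hd0
            omega
          · exact h
        have hddne1 : dd ≠ 1 := by
          intro h1
          exact hc (cofinite_of_gcd_one B (hdd ▸ h1))
        have hddM : dd ≤ M := le_trans (Nat.le_of_dvd (by omega) (hdvd b hbB)) hb1.2
        have hdmem : dd ∈ Finset.Icc 2 M := by rw [Finset.mem_Icc]; omega
        have hBD : B ⊆ Finset.filter (fun k => dd ∣ k) (Finset.Icc 1 M) := by
          intro c hc'
          rw [Finset.mem_filter]
          exact ⟨hsubI hc', hdvd c hc'⟩
        have hterm : wt p M B ≤ ∑ d ∈ Finset.Icc 2 M,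
            (if (B ⊆ Finset.filter (fun k => d ∣ k) (Finset.Icc 1 M) ∧ 2 ≤ B.card)
              then wt p M B else 0) := by
          have hs := Finset.single_le_sum
            (f := fun d => if (B ⊆ Finset.filter (fun k => d ∣ k) (Finset.Icc 1 M) ∧ 2 ≤ B.card)
              then wt p M B else 0)
            (fun i _ => by
              split
              · exact hwt B
              · exact le_refl 0) hdmem
          rwa [if_pos ⟨hBD, hcard⟩] at hs
        linarith
  refine le_trans (Finset.sum_le_sum hpt) ?_
  rw [Finset.sum_add_distrib, Finset.sum_add_distrib]
  refine add_le_add (add_le_add ?_ ?_) ?_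
  · -- empty-set term
    rw [Finset.sum_eq_single_of_mem ∅ (Finset.empty_mem_powerset _)
      (fun b _ hb => if_neg hb)]
    rw [if_pos rfl]
    apply le_of_eq
    simp [wt]
  · -- singleton terms
    rw [Finset.sum_comm]
    have hinner : ∀ b ∈ Finset.Icc 1 M,
        ∑ B ∈ (Finset.Icc 1 M).powerset, (if B = {b} then wt p M B else 0)
        = p * (1-p)^(M-1) := by
      intro b hb
      have hmem : ({b} : Finset ℕ) ∈ (Finset.Icc 1 M).powerset :=
        Finset.mem_powerset.mpr (Finset.singleton_subset_iff.mpr hb)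
      rw [Finset.sum_eq_single_of_mem (f := fun B => if B = {b} then wt p M B else 0) {b} hmem
        (fun B _ hBb => if_neg hBb), if_pos rfl]
      simp [wt]
    rw [Finset.sum_congr rfl hinner, Finset.sum_const, cardIcc, nsmul_eq_mul]
    apply le_of_eq; ring
  · -- pairs terms
    rw [Finset.sum_comm]
    have hper : ∀ d ∈ Finset.Icc 2 M,
        ∑ B ∈ (Finset.Icc 1 M).powerset,
          (if (B ⊆ Finset.filter (fun k => d ∣ k) (Finset.Icc 1 M) ∧ 2 ≤ B.card)
            then wt p M B else 0)
        ≤ (1/(d:ℝ)^2) * (((M:ℝ)*p)^2 * (1-p)^(M - M/2)) := by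
      intro d hd
      have hd2 : 2 ≤ d := (Finset.mem_Icc.mp hd).1
      refine le_trans (inner_d p hp0 hp1 M d hd2) ?_
      have hdr : (2:ℝ) ≤ (d:ℝ) := by exact_mod_cast hd2
      have ha : ((M / d : ℕ) : ℝ) ≤ (M:ℝ)/(d:ℝ) := Nat.cast_div_le
      have ha2 : ((M / d : ℕ) : ℝ)^2 ≤ ((M:ℝ)/(d:ℝ))^2 :=
        pow_le_pow_left₀ (Nat.cast_nonneg _) ha 2
      have hpow : (1-p)^(M - M/d) ≤ (1-p)^(M - M/2) := by
        apply pow_le_pow_of_le_one hq0 (by linarith)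
        have : M / d ≤ M / 2 := Nat.div_le_div_left hd2 (by norm_num)
        omega
      calc ((M / d : ℕ) : ℝ)^2 * p^2 * (1 - p)^(M - M/d)
          ≤ ((M:ℝ)/(d:ℝ))^2 * p^2 * (1 - p)^(M - M/2) := by
            apply mul_le_mul
            · exact mul_le_mul_of_nonneg_right ha2 (sq_nonneg p)
            · exact hpow
            · positivity
            · positivity
        _ = (1/(d:ℝ)^2) * (((M:ℝ)*p)^2 * (1-p)^(M - M/2)) := by
            ring
    refine le_trans (Finset.sum_le_sum hper) ?_
    rw [← Finset.sum_mul]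
    calc (∑ d ∈ Finset.Icc 2 M, (1/(d:ℝ)^2)) * (((M:ℝ)*p)^2 * (1-p)^(M - M/2))
        ≤ 1 * (((M:ℝ)*p)^2 * (1-p)^(M - M/2)) := by
          apply mul_le_mul_of_nonneg_right (invsq M) (by positivity)
      _ = ((M:ℝ)*p)^2 * (1-p)^(M - M/2) := one_mul _

lemma final_exp (p : ℝ) (hp0 : 0 ≤ p) (hp1 : p ≤ 1) (M : ℕ) :
    (1-p)^M + (M:ℝ)*p*(1-p)^(M-1) + ((M:ℝ)*p)^2 * (1-p)^(M - M/2)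
    ≤ Real.exp (-((M:ℝ)*p)) + Real.exp 1 * (((M:ℝ)*p) * Real.exp (-((M:ℝ)*p)))
      + ((M:ℝ)*p)^2 * Real.exp (-(((M:ℝ)*p)/2)) := by
  set x := (M:ℝ)*p with hxdef
  have hx0 : 0 ≤ x := mul_nonneg (Nat.cast_nonneg M) hp0
  have hpiece1 : (1-p)^M ≤ Real.exp (-x) := by
    have := pow_one_sub_le_exp p hp1 M
    rwa [show -(p * (M:ℝ)) = -x by rw [hxdef]; ring] at this
  have hpiece2 : (M:ℝ)*p*(1-p)^(M-1) ≤ Real.exp 1 * (x * Real.exp (-x)) := by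
    have h2a := pow_one_sub_le_exp p hp1 (M-1)
    have hge : (M:ℝ) - 1 ≤ ((M-1:ℕ):ℝ) := by
      cases M with
      | zero => norm_num
      | succ m => push_cast [Nat.succ_sub_one]; ring_nf; exact le_refl _
    have h2b : -(p*((M-1:ℕ):ℝ)) ≤ -x + p := by
      rw [hxdef]; nlinarith [hp0, hge]
    have h2c : (1-p)^(M-1) ≤ Real.exp (-x + p) :=
      le_trans h2a (Real.exp_le_exp.mpr h2b)
    have h2d : Real.exp (-x + p) ≤ Real.exp (-x) * Real.exp 1 := by
      rw [Real.exp_add]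
      exact mul_le_mul_of_nonneg_left (Real.exp_le_exp.mpr hp1) (Real.exp_pos _).le
    calc (M:ℝ)*p*(1-p)^(M-1) ≤ x * (Real.exp (-x) * Real.exp 1) :=
          mul_le_mul_of_nonneg_left (le_trans h2c h2d) hx0
      _ = Real.exp 1 * (x * Real.exp (-x)) := by ring
  have hpiece3 : ((M:ℝ)*p)^2 * (1-p)^(M - M/2) ≤ x^2 * Real.exp (-(x/2)) := by
    have h3a := pow_one_sub_le_exp p hp1 (M - M/2)
    have hcast : ((M - M/2:ℕ):ℝ) = (M:ℝ) - ((M/2:ℕ):ℝ) := by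
      rw [Nat.cast_sub (Nat.div_le_self M 2)]
    have h3b : ((M/2:ℕ):ℝ) ≤ (M:ℝ)/2 := Nat.cast_div_le
    have h3c : -(p*((M - M/2:ℕ):ℝ)) ≤ -(x/2) := by
      rw [hxdef, hcast]
      nlinarith [hp0, h3b, Nat.cast_nonneg (α := ℝ) M]
    have h3d : (1-p)^(M - M/2) ≤ Real.exp (-(x/2)) :=
      le_trans h3a (Real.exp_le_exp.mpr h3c)
    exact mul_le_mul_of_nonneg_left h3d (sq_nonneg _)
  exact add_le_add (add_le_add hpiece1 hpiece2) hpiece3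

end RNSAux

theorem statement2 (p : ℕ → ℝ) (hp : ∀ M, p M ∈ Set.Icc (0 : ℝ) 1) :
    (Tendsto (fun M : ℕ => (M : ℝ) * p M) atTop atTop →
      Tendsto (fun M : ℕ => probEvent M (p M) {S | IsCofinite S}) atTop (𝓝 1)) ∧
    (Tendsto (fun M : ℕ => (M : ℝ) * p M) atTop (𝓝 0) →
      Tendsto (fun M : ℕ => probEvent M (p M) {S | IsCofinite S}) atTop (𝓝 0)) := by
  classical
  constructor
  · -- supercritical regime
    intro hx
    set NC : ℕ → ℝ := fun M => ∑ B ∈ (Finset.Icc 1 M).powerset,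
      (if IsCofinite (AddSubmonoid.closure (B : Set ℕ)) then 0 else wt (p M) M B) with hNCdef
    have hsplit : ∀ M, probEvent M (p M) {S | IsCofinite S} = 1 - NC M :=
      fun M => RNSAux.split_one (p M) M
    have hNC0 : ∀ M, 0 ≤ NC M := by
      intro M
      apply Finset.sum_nonneg
      intro B _
      split
      · exact le_refl 0
      · exact RNSAux.wt_nonneg (p M) (hp M).1 (hp M).2 M B
    have hglim : Tendsto (fun x : ℝ => Real.exp (-x)
        + Real.exp 1 * (x * Real.exp (-x)) + x^2 * Real.exp (-(x/2))) atTop (𝓝 0) := by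
      have t1 : Tendsto (fun x : ℝ => Real.exp (-x)) atTop (𝓝 0) :=
        Real.tendsto_exp_neg_atTop_nhds_zero
      have t2 : Tendsto (fun x : ℝ => x * Real.exp (-x)) atTop (𝓝 0) := by
        have h := Real.tendsto_pow_mul_exp_neg_atTop_nhds_zero 1
        simpa using h
      have t3 : Tendsto (fun x : ℝ => x^2 * Real.exp (-(x/2))) atTop (𝓝 0) := by
        have h2 := Real.tendsto_pow_mul_exp_neg_atTop_nhds_zero 2
        have hdiv : Tendsto (fun x : ℝ => x/2) atTop atTop :=
          Tendsto.atTop_div_const (by norm_num) tendsto_id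
        have hcomp := h2.comp hdiv
        have heq : (fun x : ℝ => x^2 * Real.exp (-(x/2)))
            = fun x => 4 * (((x/2)^2) * Real.exp (-(x/2))) := by
          funext x; ring
        rw [heq]
        have := hcomp.const_mul (4:ℝ)
        simpa [Function.comp] using this
      have := (t1.add (t2.const_mul (Real.exp 1))).add t3
      simpa using this
    have hNCle : ∀ M, NC M ≤ Real.exp (-((M:ℝ)*p M))
        + Real.exp 1 * (((M:ℝ)*p M) * Real.exp (-((M:ℝ)*p M)))
        + ((M:ℝ)*p M)^2 * Real.exp (-(((M:ℝ)*p M)/2)) := by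
      intro M
      exact le_trans (RNSAux.NC_bound (p M) (hp M).1 (hp M).2 M)
        (RNSAux.final_exp (p M) (hp M).1 (hp M).2 M)
    have hNCzero : Tendsto NC atTop (𝓝 0) := by
      apply squeeze_zero hNC0 hNCle
      exact hglim.comp hx
    have hfun : (fun M : ℕ => probEvent M (p M) {S | IsCofinite S})
        = fun M => 1 - NC M := funext hsplit
    rw [hfun]
    have := tendsto_const_nhds (x := (1:ℝ)) (f := atTop (α := ℕ)) |>.sub hNCzero
    simpa using this
  · -- subcritical regime
    intro hx
    apply squeeze_zero (fun M => RNSAux.prob_nonneg (p M) (hp M).1 (hp M).2 M _)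
      (fun M => RNSAux.part2_bound (p M) (hp M).1 (hp M).2 M) hx
end

section
/- Let S be a cofinite numerical semigroup with S ≠ ℕ and Frobenius number F(S) = n. Then S is irreducible if and only if every integer s with 0 < s < n/2 and n − s ∉ S satisfies s ∈ S. -/
open Filter Topology
open scoped Classical BigOperators

lemma gapSet_nonempty {S : AddSubmonoid ℕ} (hS' : S ≠ ⊤) : (gapSet S).Nonempty := by
  by_contra h
  rw [Set.not_nonempty_iff_eq_empty] at h
  apply hS'
  ext y
  simp only [AddSubmonoid.mem_top, iff_true]
  by_contra hy
  have : y ∈ gapSet S := hy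
  rw [h] at this
  exact this

theorem statement3 (S : AddSubmonoid ℕ) (n : ℕ) (hS : IsCofinite S) (hS' : S ≠ ⊤)
    (hF : frob S = n) :
    IsIrred S ↔ ∀ s : ℕ, 0 < s → 2 * s < n → n - s ∉ S → s ∈ S := by
  have hnS : n ∉ S := hF ▸ Nat.sSup_mem (gapSet_nonempty hS') hS.bddAbove
  have hgt : ∀ m, n < m → m ∈ S := by
    intro m hm
    by_contra hm'
    have : m ≤ n := hF ▸ le_csSup hS.bddAbove hm'
    omega
  have hn0 : 0 < n := Nat.pos_of_ne_zero fun h => hnS (h ▸ S.zero_mem)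
  constructor
  · rintro ⟨-, -, hmax⟩ s hs hs2 hns
    by_contra hsS
    set x := n - s with hx
    set T := S ⊔ AddSubmonoid.closure {x} with hT
    have hxT : x ∈ T := AddSubmonoid.mem_sup_right (AddSubmonoid.mem_closure_singleton.2 ⟨1, one_nsmul x⟩)
    have hST : S ≤ T := le_sup_left
    have hnT : n ∉ T := by
      intro hmem
      rw [hT, AddSubmonoid.mem_sup] at hmem
      obtain ⟨u, hu, z, hz, huz⟩ := hmem
      rw [AddSubmonoid.mem_closure_singleton] at hz
      obtain ⟨k, rfl⟩ := hz
      rw [smul_eq_mul] at huz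
      match k with
      | 0 =>
        have : u = n := by omega
        exact hnS (this ▸ hu)
      | 1 =>
        have : u = s := by omega
        exact hsS (this ▸ hu)
      | (k+2) =>
        have : (k+2) * x ≥ 2 * (n - s) := by nlinarith
        omega
    have hsub : gapSet T ⊆ gapSet S := fun y hy hyS => hy (hST hyS)
    have hfT : frob T = n := by
      apply le_antisymm
      · apply csSup_le ⟨n, hnT⟩
        intro y hy
        by_contra h
        exact hy (hST (hgt y (by omega)))
      · exact le_csSup (hS.subset hsub).bddAbove hnT
    have hTS := hmax T hST (hfT.trans hF.symm)
    exact hns (hTS ▸ hxT)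
  · intro hcond
    refine ⟨hS, hS', fun T hST hfT => ?_⟩
    by_contra hTS
    obtain ⟨t, htT, htS⟩ : ∃ t, t ∈ T ∧ t ∉ S := by
      by_contra h
      push_neg at h
      exact hTS (le_antisymm (fun y hy => h y hy) hST)
    have htn : t ≤ n := by
      by_contra h
      push_neg at h
      exact htS (hgt t h)
    have hTcof : IsCofinite T := hS.subset fun y hy hyS => hy (hST hyS)
    have hTtop : T ≠ ⊤ := by
      intro h
      have hempty : gapSet T = ∅ := by
        ext y; simp [gapSet, h]
      have : frob T = 0 := by rw [frob, hempty]; exact csSup_empty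
      rw [hfT, hF] at this
      omega
    have hnT : n ∉ T := by
      have := Nat.sSup_mem (gapSet_nonempty hTtop) hTcof.bddAbove
      rwa [show sSup (gapSet T) = n from (hfT.trans hF)] at this
    have hnts : n - t ∉ S := by
      intro h
      apply hnT
      have habs : (n - t) + t ∈ T := T.add_mem (hST h) htT
      have htn' : t ≠ n := fun h => hnT (h ▸ htT)
      rwa [show (n - t) + t = n by omega] at habs
    have ht0 : t ≠ 0 := fun h => htS (h ▸ S.zero_mem)
    have htn' : t ≠ n := fun h => hnT (h ▸ htT)
    rcases lt_trichotomy (2 * t) n with h | h | h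
    · exact htS (hcond t (by omega) h hnts)
    · apply hnT
      have : t + t ∈ T := T.add_mem htT htT
      rwa [show t + t = n by omega] at this
    · apply hnts
      apply hcond (n - t) (by omega) (by omega)
      rwa [show n - (n - t) = t by omega]
end

section
/- Fix n ≥ 2. The map sending an irreducible numerical semigroup S with Frobenius number n to T(S) = ⟨{a : a is a minimal generator of S and a < n/2}⟩ is a bijection from the set of irreducible numerical semigroups with Frobenius number n onto the set of numerical semigroups T with n ∉ T all of whose minimal generators are strictly less than n/2. Moreover, under this bijection, the number of minimal generators of S that are less than n/2 equals the embedding dimension e(T(S)). In particular, for each i ≥ 0 the number of irreducible numerical semigroups with Frobenius number n having exactly i minimal generators less than n/2 equals the number of numerical semigroups T with n ∉ T, embedding dimension i, and all minimal generators less than n/2. -/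
open Filter Topology
open scoped Classical BigOperators

def Irr' (n : ℕ) (S : AddSubmonoid ℕ) : Prop :=
  n ∉ S ∧ (∀ x, n < x → x ∈ S) ∧ ∀ x, x ∉ S → 2 * x = n ∨ (n - x : ℕ) ∈ S

lemma exists_split {A : Set ℕ} {x : ℕ} (hx : x ∈ AddSubmonoid.closure A) (hx0 : x ≠ 0) :
    ∃ a ∈ A, a ≠ 0 ∧ ∃ y ∈ AddSubmonoid.closure A, x = a + y := by
  induction hx using AddSubmonoid.closure_induction with
  | mem a ha =>
      exact ⟨a, ha, hx0, 0, (AddSubmonoid.closure A).zero_mem, (add_zero a).symm⟩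
  | zero => exact absurd rfl hx0
  | add x y hx hy ihx ihy =>
      rcases Nat.eq_zero_or_pos x with rfl | hxpos
      · rw [zero_add] at hx0 ⊢; exact ihy hx0
      · obtain ⟨a, ha, ha0, z, hz, hxz⟩ := ihx hxpos.ne'
        exact ⟨a, ha, ha0, z + y, (AddSubmonoid.closure A).add_mem hz hy, by omega⟩

lemma minGens_closure_subset {A : Set ℕ} (h0 : 0 ∉ A) :
    minGens (AddSubmonoid.closure A) ⊆ A := by
  rintro s ⟨hs, hs0, hmin⟩
  obtain ⟨a, ha, ha0, y, hy, rfl⟩ := exists_split hs hs0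
  rcases Nat.eq_zero_or_pos y with rfl | hypos
  · simpa using ha
  · exact absurd ⟨a, AddSubmonoid.subset_closure ha, y, hy, ha0, hypos.ne', rfl⟩ hmin

lemma le_closure_minGens (T : AddSubmonoid ℕ) : T ≤ AddSubmonoid.closure (minGens T) := by
  intro t ht
  induction t using Nat.strong_induction_on with
  | _ t ih =>
    rcases Nat.eq_zero_or_pos t with rfl | htpos
    · exact AddSubmonoid.zero_mem _
    by_cases hm : ∃ a ∈ T, ∃ b ∈ T, a ≠ 0 ∧ b ≠ 0 ∧ t = a + b
    · obtain ⟨a, ha, b, hb, ha0, hb0, rfl⟩ := hm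
      exact AddSubmonoid.add_mem _ (ih a (by omega) ha) (ih b (by omega) hb)
    · exact AddSubmonoid.subset_closure ⟨ht, htpos.ne', hm⟩

lemma small_mem_closure {n : ℕ} {S : AddSubmonoid ℕ} :
    ∀ s ∈ S, 2 * s < n → s ∈ AddSubmonoid.closure {a : ℕ | a ∈ minGens S ∧ 2 * a < n} := by
  intro s
  induction s using Nat.strong_induction_on with
  | _ s ih =>
    intro hs hsn
    rcases Nat.eq_zero_or_pos s with rfl | hspos
    · exact AddSubmonoid.zero_mem _
    by_cases hm : ∃ a ∈ S, ∃ b ∈ S, a ≠ 0 ∧ b ≠ 0 ∧ s = a + b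
    · obtain ⟨a, ha, b, hb, ha0, hb0, rfl⟩ := hm
      exact AddSubmonoid.add_mem _ (ih a (by omega) ha (by omega)) (ih b (by omega) hb (by omega))
    · exact AddSubmonoid.subset_closure ⟨⟨hs, hspos.ne', hm⟩, hsn⟩

lemma frob_eq_of {S : AddSubmonoid ℕ} {n : ℕ} (hn : n ∉ S) (hb : ∀ x, x ∉ S → x ≤ n) :
    frob S = n :=
  le_antisymm (csSup_le ⟨n, hn⟩ hb) (le_csSup ⟨n, hb⟩ hn)

lemma isIrred_iff {n : ℕ} (hn : 2 ≤ n) (S : AddSubmonoid ℕ) :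
    (IsIrred S ∧ frob S = n) ↔ Irr' n S := by
  constructor
  · rintro ⟨⟨hcof, hne, hmax⟩, hfrob⟩
    have hne' : (gapSet S).Nonempty := by
      rcases Set.eq_empty_or_nonempty (gapSet S) with h | h
      · refine absurd ?_ hne
        ext x
        simpa using not_not.mp (Set.eq_empty_iff_forall_notMem.mp h x)
      · exact h
    have hmem : n ∈ gapSet S := hfrob ▸ Nat.sSup_mem hne' hcof.bddAbove
    have hub : ∀ x, x ∉ S → x ≤ n := fun x hx => hfrob ▸ le_csSup hcof.bddAbove hx
    refine ⟨hmem, fun x hx => by_contra fun hxS => absurd (hub x hxS) (by omega), ?_⟩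
    intro x hx
    by_contra hcon
    push_neg at hcon
    obtain ⟨hx2, hnx⟩ := hcon
    set G : Set ℕ := {x | x ∉ S ∧ 2 * x ≠ n ∧ (n - x : ℕ) ∉ S} with hG
    have hGne : G.Nonempty := ⟨x, hx, hx2, hnx⟩
    have hGfin : G.Finite := hcof.subset fun y hy => hy.1
    obtain ⟨m, hmG, hmmax⟩ := Set.exists_max_image G id hGfin hGne
    obtain ⟨hmS, hm2, hmnS⟩ := hmG
    have hm0 : m ≠ 0 := fun h => hmS (h ▸ S.zero_mem)
    have hmlt : m < n := by
      have h1 := hub m hmS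
      rcases Nat.lt_or_ge m n with h | h
      · exact h
      · have : m = n := by omega
        subst this
        exact absurd (by simpa using S.zero_mem) hmnS
    rcases Nat.lt_or_ge (2 * m) n with hlt | hge
    · have hy : (n - m) ∈ G := by
        refine ⟨hmnS, by omega, ?_⟩
        have h2 : n - (n - m) = m := by omega
        rw [h2]; exact hmS
      have := hmmax _ hy
      simp only [id] at this
      omega
    · have h2m : n < 2 * m := by omega
      set T := S ⊔ AddSubmonoid.closure {m} with hT
      have hST : S ≤ T := le_sup_left
      have hnT : n ∉ T := by
        intro hmemT
        rw [AddSubmonoid.mem_sup] at hmemT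
        obtain ⟨s, hsS, c, hc, hsc⟩ := hmemT
        rw [AddSubmonoid.mem_closure_singleton] at hc
        obtain ⟨k, rfl⟩ := hc
        simp only [smul_eq_mul] at hsc
        rcases k with _ | _ | k
        · simp at hsc; exact hmem (hsc ▸ hsS)
        · have : s = n - m := by omega
          exact hmnS (this ▸ hsS)
        · have h1 : (k + 1 + 1) * m = k * m + m + m := by ring
          omega
      have hfT : frob T = n := frob_eq_of hnT fun y hy => hub y fun hyS => hy (hST hyS)
      have := hmax T hST (by rw [hfT, hfrob])
      have hmT : m ∈ T := SetLike.le_def.mp le_sup_right (AddSubmonoid.mem_closure_singleton.mpr ⟨1, one_smul _ _⟩)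
      exact hmS (this ▸ hmT)
  · rintro ⟨hnS, hbig, hsym⟩
    have hub : ∀ x, x ∉ S → x ≤ n := fun x hx => by
      by_contra h; exact hx (hbig x (by omega))
    have hcof : IsCofinite S := (Set.finite_Iic n).subset fun y hy => hub y hy
    have hne : S ≠ ⊤ := fun h => hnS (h ▸ AddSubmonoid.mem_top n)
    have hfrob : frob S = n := frob_eq_of hnS hub
    refine ⟨⟨hcof, hne, ?_⟩, hfrob⟩
    intro T hST hfT
    rw [hfrob] at hfT
    have hTne : T ≠ ⊤ := by
      rintro rfl
      have : gapSet ⊤ = (∅ : Set ℕ) := by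
        ext y; simp [gapSet]
      rw [frob, this, csSup_empty] at hfT
      have hb : (⊥ : ℕ) = 0 := rfl
      omega
    have hTgne : (gapSet T).Nonempty := by
      rcases Set.eq_empty_or_nonempty (gapSet T) with h | h
      · refine absurd ?_ hTne
        ext y
        simpa using not_not.mp (Set.eq_empty_iff_forall_notMem.mp h y)
      · exact h
    have hTcof : (gapSet T).Finite := hcof.subset fun y hy => fun hyS => hy (hST hyS)
    have hnT : n ∉ T := hfT ▸ Nat.sSup_mem hTgne hTcof.bddAbove
    refine le_antisymm ?_ hST
    intro y hyT
    by_contra hyS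
    rcases hsym y hyS with h | h
    · have hyy : y + y = n := by omega
      exact hnT (hyy ▸ T.add_mem hyT hyT)
    · have hyn : y ≤ n := hub y hyS
      have : (n - y) + y = n := by omega
      exact hnT (this ▸ T.add_mem (hST h) hyT)

lemma psi_aux {n : ℕ} {T : AddSubmonoid ℕ} {x y : ℕ} (hx : x ∈ T)
    (hy1 : n < 2 * y) (hy2 : y ≠ n) (hy3 : y ≤ n → (n - y : ℕ) ∉ T) :
    n < 2 * (x + y) ∧ x + y ≠ n ∧ (x + y ≤ n → (n - (x + y) : ℕ) ∉ T) := by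
  refine ⟨by omega, ?_, ?_⟩
  · intro h
    have hxy : n - y = x := by omega
    exact hy3 (by omega) (hxy ▸ hx)
  · intro h hmem
    have hxy : (n - (x + y)) + x = n - y := by omega
    exact hy3 (by omega) (hxy ▸ T.add_mem hmem hx)

def psi (n : ℕ) (T : AddSubmonoid ℕ) : AddSubmonoid ℕ where
  carrier := {x | x ∈ T ∨ (n < 2 * x ∧ x ≠ n ∧ (x ≤ n → (n - x : ℕ) ∉ T))}
  zero_mem' := Or.inl T.zero_mem
  add_mem' := by
    rintro x y (hx | ⟨hx1, hx2, hx3⟩) (hy | ⟨hy1, hy2, hy3⟩)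
    · exact Or.inl (T.add_mem hx hy)
    · exact Or.inr (psi_aux hx hy1 hy2 hy3)
    · refine Or.inr ?_
      rw [add_comm]
      exact psi_aux hy hx1 hx2 hx3
    · exact Or.inr ⟨by omega, by omega, by omega⟩

lemma mem_psi {n : ℕ} {T : AddSubmonoid ℕ} {x : ℕ} :
    x ∈ psi n T ↔ x ∈ T ∨ (n < 2 * x ∧ x ≠ n ∧ (x ≤ n → (n - x : ℕ) ∉ T)) := Iff.rfl

lemma le_psi {n : ℕ} {T : AddSubmonoid ℕ} : T ≤ psi n T := fun _ hx => Or.inl hx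

lemma psi_irr {n : ℕ} (hn : 2 ≤ n) {T : AddSubmonoid ℕ} (hnT : n ∉ T) : Irr' n (psi n T) := by
  refine ⟨?_, ?_, ?_⟩
  · rintro (h | ⟨h1, h2, h3⟩)
    · exact hnT h
    · exact h2 rfl
  · intro x hx
    exact Or.inr ⟨by omega, by omega, fun h => absurd h (by omega)⟩
  · intro x hx
    have hx' : ¬ (x ∈ T ∨ (n < 2 * x ∧ x ≠ n ∧ (x ≤ n → (n - x : ℕ) ∉ T))) := hx
    push_neg at hx'
    obtain ⟨hxT, h2⟩ := hx'
    rcases Nat.lt_trichotomy x n with hlt | rfl | hgt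
    · by_cases h2x : 2 * x = n
      · exact Or.inl h2x
      · right
        rcases Nat.lt_or_ge n (2 * x) with hb | hs
        · obtain ⟨_, hmem⟩ := h2 hb (by omega)
          exact Or.inl hmem
        · have hx0 : x ≠ 0 := fun h => hxT (h ▸ T.zero_mem)
          refine Or.inr ⟨by omega, by omega, fun h hmem => ?_⟩
          have he : n - (n - x) = x := by omega
          rw [he] at hmem
          exact hxT hmem
    · refine Or.inr ?_
      rw [Nat.sub_self]
      exact AddSubmonoid.zero_mem _
    · exact absurd (Or.inr ⟨by omega, by omega, fun h => absurd h (by omega)⟩) hx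

lemma psi_small {n : ℕ} (hn : 2 ≤ n) {S : AddSubmonoid ℕ} (h : Irr' n S) :
    psi n (AddSubmonoid.closure {a : ℕ | a ∈ minGens S ∧ 2 * a < n}) = S := by
  obtain ⟨hnS, hbig, hsym⟩ := h
  have hTS : AddSubmonoid.closure {a : ℕ | a ∈ minGens S ∧ 2 * a < n} ≤ S :=
    AddSubmonoid.closure_le.mpr fun a ha => ha.1.1
  ext x
  constructor
  · rintro (hx | ⟨h1, h2, h3⟩)
    · exact hTS hx
    · by_contra hxS
      rcases hsym x hxS with h | hmem
      · omega
      · have hxn : x ≤ n := by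
          by_contra hc
          exact hxS (hbig x (by omega))
        exact h3 hxn (small_mem_closure _ hmem (by omega))
  · intro hxS
    rcases Nat.lt_trichotomy (2 * x) n with hlt | heq | hgt
    · exact Or.inl (small_mem_closure x hxS hlt)
    · have hxx : x + x = n := by omega
      exact absurd (hxx ▸ S.add_mem hxS hxS) hnS
    · refine Or.inr ⟨hgt, fun h => hnS (h ▸ hxS), fun h hmem => ?_⟩
      have hxx : (n - x) + x = n := by omega
      exact hnS (hxx ▸ S.add_mem (hTS hmem) hxS)

lemma small_psi {n : ℕ} {T : AddSubmonoid ℕ} (hnT : n ∉ T)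
    (hmg : ∀ a ∈ minGens T, 2 * a < n) :
    AddSubmonoid.closure {a : ℕ | a ∈ minGens (psi n T) ∧ 2 * a < n} = T := by
  apply le_antisymm
  · apply AddSubmonoid.closure_le.mpr
    rintro a ⟨ha, ha2⟩
    rcases ha.1 with h | ⟨h1, _, _⟩
    · exact h
    · omega
  · refine le_trans (le_closure_minGens T) (AddSubmonoid.closure_le.mpr ?_)
    intro a ha
    have ha2 := hmg a ha
    obtain ⟨haT, ha0, hamin⟩ := ha
    refine AddSubmonoid.subset_closure ⟨⟨le_psi haT, ha0, ?_⟩, ha2⟩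
    rintro ⟨u, hu, v, hv, hu0, hv0, rfl⟩
    have hu' : u ∈ T := by
      rcases hu with h | ⟨h1, _, _⟩
      · exact h
      · omega
    have hv' : v ∈ T := by
      rcases hv with h | ⟨h1, _, _⟩
      · exact h
      · omega
    exact hamin ⟨u, hu', v, hv', hu0, hv0, rfl⟩

lemma minGens_closure_small {n : ℕ} {S : AddSubmonoid ℕ} :
    minGens (AddSubmonoid.closure {a : ℕ | a ∈ minGens S ∧ 2 * a < n})
      = {a : ℕ | a ∈ minGens S ∧ 2 * a < n} := by
  apply Set.Subset.antisymm
  · exact minGens_closure_subset (by rintro ⟨⟨_, h0, _⟩, _⟩; exact h0 rfl)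
  · rintro a ⟨haM, ha2⟩
    have hTS : AddSubmonoid.closure {a : ℕ | a ∈ minGens S ∧ 2 * a < n} ≤ S :=
      AddSubmonoid.closure_le.mpr fun b hb => hb.1.1
    obtain ⟨haS, ha0, hamin⟩ := haM
    refine ⟨AddSubmonoid.subset_closure ⟨⟨haS, ha0, hamin⟩, ha2⟩, ha0, ?_⟩
    rintro ⟨u, hu, v, hv, hu0, hv0, rfl⟩
    exact hamin ⟨u, hTS hu, v, hTS hv, hu0, hv0, rfl⟩

theorem statement6 (n : ℕ) (hn : 2 ≤ n) :
    Set.BijOn (fun S : AddSubmonoid ℕ =>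
        AddSubmonoid.closure {a : ℕ | a ∈ minGens S ∧ 2 * a < n})
      {S : AddSubmonoid ℕ | IsIrred S ∧ frob S = n}
      {T : AddSubmonoid ℕ | n ∉ T ∧ ∀ a ∈ minGens T, 2 * a < n} ∧
    (∀ S : AddSubmonoid ℕ, IsIrred S → frob S = n →
      {a : ℕ | a ∈ minGens S ∧ 2 * a < n}.ncard
        = embDim (AddSubmonoid.closure {a : ℕ | a ∈ minGens S ∧ 2 * a < n})) ∧
    (∀ i : ℕ,
      {S : AddSubmonoid ℕ | IsIrred S ∧ frob S = n ∧
          {a : ℕ | a ∈ minGens S ∧ 2 * a < n}.ncard = i}.ncard = hvec n i) := by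
  have hmaps : ∀ S : AddSubmonoid ℕ, Irr' n S →
      n ∉ AddSubmonoid.closure {a : ℕ | a ∈ minGens S ∧ 2 * a < n} ∧
      ∀ a ∈ minGens (AddSubmonoid.closure {a : ℕ | a ∈ minGens S ∧ 2 * a < n}), 2 * a < n := by
    intro S hS
    have hTS : AddSubmonoid.closure {a : ℕ | a ∈ minGens S ∧ 2 * a < n} ≤ S :=
      AddSubmonoid.closure_le.mpr fun a ha => ha.1.1
    refine ⟨fun h => hS.1 (hTS h), fun a ha => ?_⟩
    exact (minGens_closure_subset (by rintro ⟨⟨_, h0, _⟩, _⟩; exact h0 rfl) ha).2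
  have hinj : Set.InjOn (fun S : AddSubmonoid ℕ =>
      AddSubmonoid.closure {a : ℕ | a ∈ minGens S ∧ 2 * a < n})
      {S : AddSubmonoid ℕ | IsIrred S ∧ frob S = n} := by
    intro S1 h1 S2 h2 heq
    have e1 := psi_small hn ((isIrred_iff hn S1).mp h1)
    have e2 := psi_small hn ((isIrred_iff hn S2).mp h2)
    simp only at heq
    rw [← e1, ← e2, heq]
  have hcard : ∀ S : AddSubmonoid ℕ, Irr' n S →
      {a : ℕ | a ∈ minGens S ∧ 2 * a < n}.ncard
        = embDim (AddSubmonoid.closure {a : ℕ | a ∈ minGens S ∧ 2 * a < n}) := by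
    intro S hS
    rw [embDim, minGens_closure_small]
  refine ⟨⟨?_, hinj, ?_⟩, ?_, ?_⟩
  · intro S hS
    have hS' := (isIrred_iff hn S).mp hS
    exact hmaps S hS'
  · intro T hT
    refine ⟨psi n T, (isIrred_iff hn _).mpr (psi_irr hn hT.1), ?_⟩
    exact small_psi hT.1 hT.2
  · intro S hIr hfr
    exact hcard S ((isIrred_iff hn S).mp ⟨hIr, hfr⟩)
  · intro i
    have key : (fun S : AddSubmonoid ℕ =>
          AddSubmonoid.closure {a : ℕ | a ∈ minGens S ∧ 2 * a < n}) ''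
        {S : AddSubmonoid ℕ | IsIrred S ∧ frob S = n ∧
          {a : ℕ | a ∈ minGens S ∧ 2 * a < n}.ncard = i}
        = {T : AddSubmonoid ℕ | n ∉ T ∧ embDim T = i ∧ ∀ a ∈ minGens T, 2 * a < n} := by
      ext T
      constructor
      · rintro ⟨S, ⟨hIr, hfr, hc⟩, rfl⟩
        have hS' := (isIrred_iff hn S).mp ⟨hIr, hfr⟩
        exact ⟨(hmaps S hS').1, by rw [← hcard S hS', hc], (hmaps S hS').2⟩
      · rintro ⟨hnT, hdim, hsm⟩
        have hpsi := (isIrred_iff hn (psi n T)).mpr (psi_irr hn hnT)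
        refine ⟨psi n T, ⟨hpsi.1, hpsi.2, ?_⟩, small_psi hnT hsm⟩
        rw [hcard (psi n T) (psi_irr hn hnT), small_psi hnT hsm]
        exact hdim
    have hsub : {S : AddSubmonoid ℕ | IsIrred S ∧ frob S = n ∧
          {a : ℕ | a ∈ minGens S ∧ 2 * a < n}.ncard = i} ⊆
        {S : AddSubmonoid ℕ | IsIrred S ∧ frob S = n} := fun S hS => ⟨hS.1, hS.2.1⟩
    rw [hvec, ← key, Set.ncard_image_of_injOn (hinj.mono hsub)]
end

section
/- Fix n ≥ 1. The maximum of the embedding dimension e(T), taken over all numerical semigroups T with n ∉ T all of whose minimal generators are strictly less than n/2, equals ⌊(n−1)/2⌋ − ⌊n/3⌋. Equivalently, the largest i with h_{n,i} > 0 (the degree of the h-polynomial of Δ_n) is ⌊(n−1)/2⌋ − ⌊n/3⌋. -/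
open Filter Topology
open scoped Classical BigOperators

lemma closure_minGens (T : AddSubmonoid ℕ) : AddSubmonoid.closure (minGens T) = T := by
  apply le_antisymm
  · rw [AddSubmonoid.closure_le]; exact fun x hx => hx.1
  · intro x hx
    induction x using Nat.strong_induction_on with
    | _ x ih =>
      rcases eq_or_ne x 0 with rfl | hx0
      · exact zero_mem _
      by_cases hg : x ∈ minGens T
      · exact AddSubmonoid.subset_closure hg
      · have hex : ∃ a ∈ T, ∃ b ∈ T, a ≠ 0 ∧ b ≠ 0 ∧ x = a + b := by
          by_contra h; exact hg ⟨hx, hx0, h⟩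
        obtain ⟨a, ha, b, hb, ha0, hb0, rfl⟩ := hex
        exact add_mem (ih a (by omega) ha) (ih b (by omega) hb)

lemma mul_mem_of_mem (T : AddSubmonoid ℕ) {a : ℕ} (ha : a ∈ T) (k : ℕ) : k * a ∈ T := by
  simpa [nsmul_eq_mul] using T.nsmul_mem ha k

lemma embDim_le_key (n : ℕ) (hn : 1 ≤ n) (T : AddSubmonoid ℕ) (hnT : n ∉ T)
    (hsm : ∀ a ∈ minGens T, 2 * a < n) : embDim T ≤ (n - 1) / 2 - n / 3 := by
  set A := minGens T with hA
  have hAsub : A ⊆ Set.Ioo 0 n := by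
    intro g hg
    have := hsm g hg
    have := hg.2.1
    exact ⟨by omega, by omega⟩
  have hAfin : A.Finite := (Set.finite_Ioo 0 n).subset hAsub
  rcases A.eq_empty_or_nonempty with hAe | hne
  · simp [embDim, ← hA, hAe]
  set a := sInf A with ha_def
  have ha : a ∈ A := Nat.sInf_mem hne
  have hmin : ∀ g ∈ A, a ≤ g := fun g hg => Nat.sInf_le hg
  have haT : a ∈ T := ha.1
  have ha0 : a ≠ 0 := ha.2.1
  have h2a : 2 * a < n := hsm a ha
  haveI : NeZero a := ⟨ha0⟩
  -- injectivity of reduction mod a on A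
  have hinj : Set.InjOn (fun g : ℕ => (g : ZMod a)) A := by
    have key : ∀ g ∈ A, ∀ h ∈ A, g < h → (g : ZMod a) ≠ (h : ZMod a) := by
      intro g hg h hh hlt heq
      have hmod : g ≡ h [MOD a] := (ZMod.natCast_eq_natCast_iff _ _ _).mp heq
      have hdvd : a ∣ h - g := (Nat.modEq_iff_dvd' (le_of_lt hlt)).mp hmod
      obtain ⟨k, hk⟩ := hdvd
      have hk0 : k ≠ 0 := by rintro rfl; omega
      have heq2 : h = g + k * a := by
        have : a * k = k * a := Nat.mul_comm _ _
        omega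
      exact hh.2.2 ⟨g, hg.1, k * a, mul_mem_of_mem T haT k, hg.2.1,
        Nat.mul_ne_zero hk0 ha0, heq2⟩
    intro g hg h hh heq
    rcases lt_trichotomy g h with hlt | he | hlt
    · exact absurd heq (key g hg h hh hlt)
    · exact he
    · exact absurd heq.symm (key h hh g hg hlt)
  -- no two generators sum to n mod a
  have hpair : ∀ g ∈ A, ∀ h ∈ A, (g : ZMod a) + (h : ZMod a) ≠ (n : ZMod a) := by
    intro g hg h hh heq
    have hgh : g + h < n := by
      have := hsm g hg; have := hsm h hh; omega
    have hmod : g + h ≡ n [MOD a] := by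
      rw [← ZMod.natCast_eq_natCast_iff]; push_cast; exact heq
    have hdvd : a ∣ n - (g + h) := (Nat.modEq_iff_dvd' (le_of_lt hgh)).mp hmod
    obtain ⟨k, hk⟩ := hdvd
    have : n = g + h + a * k := by omega
    exact hnT (this ▸ add_mem (add_mem hg.1 hh.1) (by simpa [mul_comm] using mul_mem_of_mem T haT k))
  -- n is not 0 mod a
  have hn0 : (n : ZMod a) ≠ 0 := by
    intro h0
    have hdvd : a ∣ n := (ZMod.natCast_eq_zero_iff _ _).mp h0
    obtain ⟨k, hk⟩ := hdvd
    exact hnT (hk ▸ by simpa [mul_comm] using mul_mem_of_mem T haT k)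
  -- cardinality bound 2e ≤ a
  classical
  set Afin := hAfin.toFinset with hAfin_def
  have hcardA : embDim T = Afin.card := by
    rw [embDim, ← hA, Set.ncard_eq_toFinset_card _ hAfin]
  set R := Afin.image (fun g : ℕ => (g : ZMod a)) with hR
  have hcardR : R.card = Afin.card := by
    apply Finset.card_image_of_injOn
    intro g hg h hh heq
    exact hinj (hAfin.mem_toFinset.mp hg) (hAfin.mem_toFinset.mp hh) heq
  set R2 := R.image (fun r => (n : ZMod a) - r) with hR2
  have hcardR2 : R2.card = R.card := by
    apply Finset.card_image_of_injOn
    intro r _ s _ heq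
    exact sub_right_injective heq
  have hdisj : Disjoint R R2 := by
    rw [Finset.disjoint_left]
    intro x hxR hxR2
    obtain ⟨g, hg, hgx⟩ := Finset.mem_image.mp hxR
    obtain ⟨r, hr, hrx⟩ := Finset.mem_image.mp hxR2
    obtain ⟨h, hh, hhr⟩ := Finset.mem_image.mp hr
    apply hpair g (hAfin.mem_toFinset.mp hg) h (hAfin.mem_toFinset.mp hh)
    rw [hgx, hhr, ← hrx]
    abel
  have hbound : 2 * Afin.card ≤ a := by
    have h1 : (R ∪ R2).card = R.card + R2.card := Finset.card_union_of_disjoint hdisj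
    have h2 : (R ∪ R2).card ≤ Fintype.card (ZMod a) := Finset.card_le_univ _
    rw [ZMod.card a] at h2
    omega
  -- case split on a vs n/3
  by_cases hq : a ≤ n / 3
  · have h3a : 3 * a ≠ n := by
      intro h3
      exact hnT (h3 ▸ mul_mem_of_mem T haT 3)
    omega
  · -- all generators are in (n/3, (n-1)/2]
    have hAsub2 : A ⊆ Set.Ioc (n / 3) ((n - 1) / 2) := by
      intro g hg
      have h1 := hmin g hg
      have h2 := hsm g hg
      exact ⟨by omega, by omega⟩
    calc embDim T ≤ (Set.Ioc (n / 3) ((n - 1) / 2)).ncard := by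
          rw [embDim, ← hA]
          exact Set.ncard_le_ncard hAsub2 (Set.finite_Ioc _ _)
      _ = (n - 1) / 2 - n / 3 := by
          rw [← Finset.coe_Ioc, Set.ncard_coe_finset, Nat.card_Ioc]


lemma exists_max_semigroup (n : ℕ) (hn : 1 ≤ n) :
    ∃ T : AddSubmonoid ℕ, n ∉ T ∧ (∀ a ∈ minGens T, 2 * a < n) ∧
      embDim T = (n - 1) / 2 - n / 3 := by
  set q := n / 3 with hq
  set m' := (n - 1) / 2 with hm'
  set A₀ : Set ℕ := Set.Ioc q m' with hA₀
  set T := AddSubmonoid.closure A₀ with hT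
  have hG : ∀ x ∈ T, x = 0 ∨ (q + 1 ≤ x ∧ x ≤ m') ∨ (2 * q + 2 ≤ x ∧ x ≤ n - 1)
      ∨ n + 1 ≤ x := by
    intro x hx
    induction hx using AddSubmonoid.closure_induction with
    | mem g hg =>
      obtain ⟨hg1, hg2⟩ : q < g ∧ g ≤ m' := hg
      omega
    | zero => left; rfl
    | add x y hxT hyT hx hy => omega
  have hnotin : n ∉ T := fun h => by have := hG n h; omega
  have hQ : ∀ x ∈ T, x = 0 ∨ x ∈ A₀ ∨
      ∃ a ∈ T, ∃ b ∈ T, a ≠ 0 ∧ b ≠ 0 ∧ x = a + b := by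
    intro x hx
    induction hx using AddSubmonoid.closure_induction with
    | mem g hg => exact Or.inr (Or.inl hg)
    | zero => left; rfl
    | add x y hxT hyT hx hy =>
      rcases eq_or_ne x 0 with rfl | hx0
      · simpa using hy
      rcases eq_or_ne y 0 with rfl | hy0
      · simpa using hx
      · exact Or.inr (Or.inr ⟨x, hxT, y, hyT, hx0, hy0, rfl⟩)
  have hmg : minGens T = A₀ := by
    ext g
    constructor
    · intro hg
      rcases hQ g hg.1 with h0 | hA | hsum
      · exact absurd h0 hg.2.1
      · exact hA
      · exact absurd hsum hg.2.2
    · intro hg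
      have hg1 : q < g := hg.1
      have hg2 : g ≤ m' := hg.2
      refine ⟨AddSubmonoid.subset_closure hg, by omega, ?_⟩
      rintro ⟨a, haT, b, hbT, ha0, hb0, rfl⟩
      have hga := hG a haT
      have hgb := hG b hbT
      omega
  refine ⟨T, hnotin, ?_, ?_⟩
  · intro a ha
    rw [hmg] at ha
    obtain ⟨h1, h2⟩ : q < a ∧ a ≤ m' := ha
    omega
  · rw [embDim, hmg, hA₀, ← Finset.coe_Ioc, Set.ncard_coe_finset, Nat.card_Ioc]

lemma hvec_set_finite (n i : ℕ) :
    {T : AddSubmonoid ℕ | n ∉ T ∧ embDim T = i ∧ ∀ a ∈ minGens T, 2 * a < n}.Finite := by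
  apply Set.Finite.of_finite_image (f := minGens)
  · apply Set.Finite.subset (Set.finite_Iio n).finite_subsets
    rintro B ⟨T, hT, rfl⟩
    intro a haB
    have := hT.2.2 a haB
    exact Set.mem_Iio.mpr (by omega)
  · intro T1 _ T2 _ heq
    calc T1 = AddSubmonoid.closure (minGens T1) := (closure_minGens T1).symm
      _ = AddSubmonoid.closure (minGens T2) := by rw [heq]
      _ = T2 := closure_minGens T2


theorem statement8 (n : ℕ) (hn : 1 ≤ n) :
    (∀ T : AddSubmonoid ℕ, n ∉ T → (∀ a ∈ minGens T, 2 * a < n) →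
        embDim T ≤ (n - 1) / 2 - n / 3) ∧
    (∃ T : AddSubmonoid ℕ, n ∉ T ∧ (∀ a ∈ minGens T, 2 * a < n) ∧
        embDim T = (n - 1) / 2 - n / 3) ∧
    (0 < hvec n ((n - 1) / 2 - n / 3) ∧
      ∀ i : ℕ, 0 < hvec n i → i ≤ (n - 1) / 2 - n / 3) := by
  
  refine ⟨fun T h1 h2 => embDim_le_key n hn T h1 h2, exists_max_semigroup n hn, ?_, ?_⟩
  · obtain ⟨T, h1, h2, h3⟩ := exists_max_semigroup n hn
    unfold hvec
    exact (Set.ncard_pos (hvec_set_finite n _)).mpr ⟨T, h1, h3, h2⟩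
  · intro i hi
    unfold hvec at hi
    obtain ⟨T, h1, h2, h3⟩ := Set.nonempty_of_ncard_ne_zero hi.ne'
    exact h2 ▸ embDim_le_key n hn T h1 h3
end
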